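/- Let W ∈ ℝ^{n×n} be diagonalizable as W = Q D Q^{−1}, where Q ∈ ℝ^{n×n} is invertible with spectral norm ‖Q‖₂ ≤ α, and D is diagonal with entries d_1, …, d_n ∈ [0,1]. Let β be the number of indices with d_i = 1 and ζ the number of indices with d_i = 0. Then for every s ∈ ℝ^n and every k ≥ 1, ‖(I−W)^{k+1} s − (I−W)^{k} s‖₂ ≤ α · √(n−β−ζ) · (k^k/(k+1)^{k+1}) · ‖Q^{−1} s‖_∞. Consequently, for every δ > 0 there exists k₀ ∈ ℕ such that ‖(I−W)^{k+1} s − (I−W)^{k} s‖₂ < δ for all k ≥ k₀; one may take the minimal k₀ with k₀^{k₀}/(k₀+1)^{k₀+1} < δ/(α ‖Q^{−1} s‖_∞ √(n−β−ζ)) provided n − β − ζ > 0. -/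

import Mathlib

private lemma stmt19_poly (k : ℕ) (v : ℝ) (hv : 0 ≤ v) :
    ((k : ℝ) + 1) * v ^ k ≤ (k : ℝ) * v ^ (k + 1) + 1 := by
  induction k with
  | zero => simp
  | succ k ih =>
    have h1 : 0 ≤ (v - 1) * (v ^ (k + 1) - 1) := by
      rcases le_total v 1 with h | h
      · have : v ^ (k + 1) ≤ 1 := pow_le_one₀ hv h
        nlinarith
      · have : 1 ≤ v ^ (k + 1) := one_le_pow₀ h
        nlinarith
    have h2 : v * (((k : ℝ) + 1) * v ^ k) ≤ v * ((k : ℝ) * v ^ (k + 1) + 1) :=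
      mul_le_mul_of_nonneg_left ih hv
    push_cast
    nlinarith [pow_succ v k, pow_succ v (k + 1)]

private lemma stmt19_max (k : ℕ) (hk : 1 ≤ k) (x : ℝ) (hx : x ∈ Set.Icc (0:ℝ) 1) :
    x * (1 - x) ^ k ≤ (k : ℝ) ^ k / ((k : ℝ) + 1) ^ (k + 1) := by
  obtain ⟨hx0, hx1⟩ := hx
  have hK : (0 : ℝ) < (k : ℝ) := by exact_mod_cast hk
  have ha : (0 : ℝ) ≤ 1 - x := by linarith
  have h := stmt19_poly k (((k : ℝ) + 1) * (1 - x) / (k : ℝ)) (by positivity)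
  rw [div_pow, div_pow, mul_pow, mul_pow, pow_succ (k:ℝ) k] at h
  have hKk : (0 : ℝ) < (k : ℝ) ^ k := by positivity
  rw [le_div_iff₀ (by positivity)]
  have hK0 : (k:ℝ) ≠ 0 := ne_of_gt hK
  field_simp at h
  rw [pow_succ ((k:ℝ)+1) k] at h ⊢
  rw [pow_succ (1-x) k] at h
  set A := (1 - x) ^ k with hA
  set P := ((k:ℝ) + 1) ^ k with hP
  set C := (k:ℝ) ^ k with hC
  nlinarith [h, mul_pos hKk hK, mul_nonneg (mul_nonneg (pow_nonneg ha k) hx0)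
    (pow_nonneg (by positivity : (0:ℝ) ≤ (k:ℝ)+1) k)]

private lemma stmt19_M_nonneg (k : ℕ) : 0 ≤ (k : ℝ) ^ k / ((k : ℝ) + 1) ^ (k + 1) := by
  positivity

private lemma stmt19_M_le (k : ℕ) :
    (k : ℝ) ^ k / ((k : ℝ) + 1) ^ (k + 1) ≤ 1 / ((k : ℝ) + 1) := by
  have h : (k:ℝ)^k ≤ ((k:ℝ)+1)^k := pow_le_pow_left₀ (by positivity) (by linarith) k
  calc (k : ℝ) ^ k / ((k : ℝ) + 1) ^ (k + 1) ≤ ((k:ℝ)+1)^k / ((k : ℝ) + 1) ^ (k + 1) := by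
        gcongr
    _ = 1 / ((k : ℝ) + 1) := by
        rw [pow_succ, div_mul_eq_div_div, div_self (by positivity)]

private lemma stmt19_M_step (m : ℕ) (hm : 1 ≤ m) :
    ((m+1 : ℕ) : ℝ) ^ (m+1) / (((m+1 : ℕ) : ℝ) + 1) ^ (m + 2)
      ≤ (m : ℝ) ^ m / ((m : ℝ) + 1) ^ (m + 1) := by
  set x : ℝ := 1 / ((m : ℝ) + 2) with hx
  have hx0 : 0 ≤ x := by positivity
  have hx1 : x ≤ 1 := by
    rw [hx, div_le_one (by positivity)]; linarith
  have haux : (1 : ℝ) - x = ((m:ℝ)+1)/((m:ℝ)+2) := by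
    rw [hx]; field_simp; ring
  have h1 : x * (1 - x) ^ m ≤ (m : ℝ) ^ m / ((m : ℝ) + 1) ^ (m + 1) :=
    stmt19_max m hm x ⟨hx0, hx1⟩
  have h2 : x * (1 - x) ^ (m+1) ≤ x * (1 - x) ^ m := by
    have ha0 : (0:ℝ) ≤ 1 - x := by linarith
    have := pow_le_pow_of_le_one ha0 (by linarith) (Nat.le_succ m)
    exact mul_le_mul_of_nonneg_left this hx0
  have heq : x * (1 - x) ^ (m+1)
      = ((m+1 : ℕ) : ℝ) ^ (m+1) / (((m+1 : ℕ) : ℝ) + 1) ^ (m + 2) := by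
    rw [haux, hx, div_pow]
    push_cast
    rw [show (m:ℝ)+1+1 = (m:ℝ)+2 by ring,
      show ((m:ℝ)+2)^(m+2) = ((m:ℝ)+2)^(m+1) * ((m:ℝ)+2) by rw [← pow_succ]]
    field_simp
  linarith [heq ▸ h2]

private lemma stmt19_M_anti (k₁ k₂ : ℕ) (h1 : 1 ≤ k₁) (h : k₁ ≤ k₂) :
    (k₂ : ℝ) ^ k₂ / ((k₂ : ℝ) + 1) ^ (k₂ + 1)
      ≤ (k₁ : ℝ) ^ k₁ / ((k₁ : ℝ) + 1) ^ (k₁ + 1) := by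
  induction k₂, h using Nat.le_induction with
  | base => exact le_refl _
  | succ m hm ih =>
    exact le_trans (stmt19_M_step m (le_trans h1 hm)) ih

private lemma stmt19_conj_pow {n : ℕ} (Q A : Matrix (Fin n) (Fin n) ℝ) (hQ : IsUnit Q.det)
    (m : ℕ) : (Q * A * Q⁻¹) ^ m = Q * A ^ m * Q⁻¹ := by
  induction m with
  | zero => simp [Matrix.mul_nonsing_inv Q hQ]
  | succ m ih =>
    rw [pow_succ, ih, pow_succ]
    have h : Q⁻¹ * Q = 1 := Matrix.nonsing_inv_mul Q hQ
    rw [show Q * A ^ m * Q⁻¹ * (Q * A * Q⁻¹) = Q * A ^ m * (Q⁻¹ * Q) * A * Q⁻¹ by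
      noncomm_ring, h, Matrix.mul_one]
    noncomm_ring

private lemma stmt19_diff {n : ℕ} (W Q : Matrix (Fin n) (Fin n) ℝ) (d : Fin n → ℝ)
    (hQ : IsUnit Q.det) (hW : W = Q * Matrix.diagonal d * Q⁻¹) (s : Fin n → ℝ) (k : ℕ) :
    ((1 - W) ^ (k + 1)).mulVec s - ((1 - W) ^ k).mulVec s
      = Q.mulVec (fun i => ((1 - d i) ^ (k + 1) - (1 - d i) ^ k) * (Q⁻¹.mulVec s) i) := by
  have h1 : (1 : Matrix (Fin n) (Fin n) ℝ) - W = Q * Matrix.diagonal (fun i => 1 - d i) * Q⁻¹ := by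
    rw [hW, show Matrix.diagonal (fun i => 1 - d i)
        = (1 : Matrix (Fin n) (Fin n) ℝ) - Matrix.diagonal d by
      rw [← Matrix.diagonal_one, ← Matrix.diagonal_sub]]
    rw [Matrix.mul_sub, Matrix.sub_mul, Matrix.mul_one, Matrix.mul_nonsing_inv Q hQ]
  rw [h1, stmt19_conj_pow Q _ hQ, stmt19_conj_pow Q _ hQ, Matrix.diagonal_pow,
    Matrix.diagonal_pow]
  rw [← Matrix.sub_mulVec, ← Matrix.sub_mul, ← Matrix.mul_sub,
    ← Matrix.mulVec_mulVec, ← Matrix.mulVec_mulVec]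
  ext i
  simp [Matrix.mulVec, Matrix.sub_apply, Matrix.diagonal_apply, dotProduct,
    ite_mul, Finset.sum_ite_eq, sub_mul]

private lemma stmt19_main {n : ℕ} (W Q : Matrix (Fin n) (Fin n) ℝ) (d : Fin n → ℝ) (α : ℝ)
    (hQ : IsUnit Q.det)
    (hα : ∀ x : EuclideanSpace ℝ (Fin n), ‖(Matrix.toEuclideanLin Q) x‖ ≤ α * ‖x‖)
    (hW : W = Q * Matrix.diagonal d * Q⁻¹)
    (hd : ∀ i, d i ∈ Set.Icc (0 : ℝ) 1)
    (s : Fin n → ℝ) (k : ℕ) (hk : 1 ≤ k) :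
    ‖(WithLp.equiv 2 (Fin n → ℝ)).symm
        (((1 - W) ^ (k + 1)).mulVec s - ((1 - W) ^ k).mulVec s)‖
      ≤ α * Real.sqrt ((n - (Finset.univ.filter fun i => d i = 1).card
            - (Finset.univ.filter fun i => d i = 0).card : ℕ) : ℝ)
          * ((k : ℝ) ^ k / ((k : ℝ) + 1) ^ (k + 1)) * ‖Q⁻¹.mulVec s‖ := by
  classical
  set w : Fin n → ℝ := Q⁻¹.mulVec s with hw
  set M : ℝ := (k : ℝ) ^ k / ((k : ℝ) + 1) ^ (k + 1) with hM
  set u : Fin n → ℝ := fun i => ((1 - d i) ^ (k + 1) - (1 - d i) ^ k) * w i with hu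
  have hM0 : 0 ≤ M := by positivity
  have hN0 : 0 ≤ ‖w‖ := norm_nonneg _
  set r : ℕ := n - (Finset.univ.filter fun i => d i = 1).card
      - (Finset.univ.filter fun i => d i = 0).card with hr
  rcases Nat.eq_zero_or_pos n with hn | hn
  · subst hn
    have h0 : ((WithLp.equiv 2 (Fin 0 → ℝ)).symm
        (((1 - W) ^ (k + 1)).mulVec s - ((1 - W) ^ k).mulVec s)) = 0 := Subsingleton.elim _ _
    have h0' : ‖w‖ = 0 := by
      rw [show w = 0 from Subsingleton.elim _ _, norm_zero]
    rw [h0, norm_zero, h0']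
    simp
  have hα0 : 0 ≤ α := by
    have h1 := hα (EuclideanSpace.single ⟨0, hn⟩ 1)
    rw [EuclideanSpace.norm_single, norm_one, mul_one] at h1
    exact le_trans (norm_nonneg _) h1
  rw [stmt19_diff W Q d hQ hW s k]
  have hstep : ‖(WithLp.equiv 2 (Fin n → ℝ)).symm (Q.mulVec u)‖
      ≤ α * ‖(WithLp.equiv 2 (Fin n → ℝ)).symm u‖ := by
    have := hα ((WithLp.equiv 2 (Fin n → ℝ)).symm u)
    rw [WithLp.equiv_symm_apply] at this ⊢
    rwa [Matrix.toEuclideanLin_apply_piLp_toLp] at this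
  refine le_trans hstep ?_
  rw [show α * Real.sqrt (r : ℝ) * M * ‖w‖ = α * (Real.sqrt (r : ℝ) * (M * ‖w‖)) by ring]
  refine mul_le_mul_of_nonneg_left ?_ hα0
  rw [EuclideanSpace.norm_eq]
  set T : Finset (Fin n) := Finset.univ.filter (fun i => ¬(d i = 1 ∨ d i = 0)) with hT
  have hzero : ∀ i ∈ Finset.univ, i ∉ T →
      ‖(WithLp.equiv 2 (Fin n → ℝ)).symm u i‖ ^ 2 = 0 := by
    intro i _ hiT
    have : d i = 1 ∨ d i = 0 := by
      by_contra hcon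
      exact hiT (Finset.mem_filter.2 ⟨Finset.mem_univ i, hcon⟩)
    have hui : u i = 0 := by
      rcases this with h | h <;> simp [hu, h, zero_pow (by omega : k ≠ 0)]
    simp [WithLp.equiv_symm_apply, PiLp.toLp_apply, hui]
  rw [← Finset.sum_subset (Finset.subset_univ T) hzero]
  have hterm : ∀ i ∈ T, ‖(WithLp.equiv 2 (Fin n → ℝ)).symm u i‖ ^ 2 ≤ (M * ‖w‖) ^ 2 := by
    intro i _
    have hi := hd i
    have habs : |u i| ≤ M * ‖w‖ := by
      have h1 : |(1 - d i) ^ (k + 1) - (1 - d i) ^ k| = d i * (1 - d i) ^ k := by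
        have : (1 - d i) ^ (k + 1) - (1 - d i) ^ k = -(d i * (1 - d i) ^ k) := by
          rw [pow_succ]; ring
        rw [this, abs_neg, abs_of_nonneg]
        exact mul_nonneg hi.1 (pow_nonneg (by linarith [hi.2]) _)
      have h2 : d i * (1 - d i) ^ k ≤ M := stmt19_max k hk (d i) hi
      have h3 : |w i| ≤ ‖w‖ := norm_le_pi_norm w i
      calc |u i| = |(1 - d i) ^ (k + 1) - (1 - d i) ^ k| * |w i| := abs_mul _ _
        _ ≤ M * ‖w‖ := by
            rw [h1]
            exact mul_le_mul h2 h3 (abs_nonneg _)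
              (le_trans (mul_nonneg hi.1 (pow_nonneg (by linarith [hi.2]) _)) h2)
    calc ‖(WithLp.equiv 2 (Fin n → ℝ)).symm u i‖ ^ 2 = |u i| ^ 2 := rfl
      _ ≤ (M * ‖w‖) ^ 2 := pow_le_pow_left₀ (abs_nonneg _) habs 2
  have hsum := Finset.sum_le_card_nsmul T _ _ hterm
  have hcard : (T.card : ℝ) = (r : ℝ) := by
    congr 1
    have h1 : (Finset.univ.filter fun i => d i = 1 ∨ d i = 0).card + T.card = n := by
      have := Finset.card_filter_add_card_filter_not
        (s := (Finset.univ : Finset (Fin n))) (p := fun i => d i = 1 ∨ d i = 0)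
      rw [Finset.card_univ, Fintype.card_fin] at this
      exact this
    have h2 : (Finset.univ.filter fun i => d i = 1 ∨ d i = 0).card
        = (Finset.univ.filter fun i => d i = 1).card
          + (Finset.univ.filter fun i => d i = 0).card := by
      rw [Finset.filter_or]
      apply Finset.card_union_of_disjoint
      rw [Finset.disjoint_filter]
      intro i _ h1' h0'
      rw [h1'] at h0'; norm_num at h0'
    omega
  calc Real.sqrt (∑ i ∈ T, ‖(WithLp.equiv 2 (Fin n → ℝ)).symm u i‖ ^ 2)
      ≤ Real.sqrt ((T.card : ℝ) * (M * ‖w‖) ^ 2) := by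
        apply Real.sqrt_le_sqrt
        simpa [nsmul_eq_mul] using hsum
    _ = Real.sqrt (r : ℝ) * (M * ‖w‖) := by
        rw [hcard, Real.sqrt_mul (by positivity), Real.sqrt_sq (by positivity)]



/-- Let `W = Q D Q⁻¹` with `Q` invertible of spectral norm
`‖Q‖₂ ≤ α` and `D` diagonal with entries `d i ∈ [0,1]`; let `β` (resp. `ζ`) be the
number of indices with `d i = 1` (resp. `d i = 0`). Then for every `s` and `k`,
`‖(I-W)^{k+1} s - (I-W)^k s‖₂ ≤ α √(n-β-ζ) (k^k/(k+1)^{k+1}) ‖Q⁻¹ s‖_∞`.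
Consequently the stopping criterion `‖s_{k+1} - s_k‖₂ < δ` is met after finitely
many steps, and (provided `n-β-ζ > 0`) one may take any `k₀` with
`k₀^{k₀}/(k₀+1)^{k₀+1} < δ/(α ‖Q⁻¹ s‖_∞ √(n-β-ζ))`.
(On `Fin n → ℝ` the default norm is the sup norm `‖·‖_∞`; the Euclidean norm is
obtained through `WithLp.equiv 2`.) -/
theorem stmt_19 (n : ℕ) (W Q : Matrix (Fin n) (Fin n) ℝ) (d : Fin n → ℝ) (α : ℝ)
    (hQ : IsUnit Q.det)
    (hα : ∀ x : EuclideanSpace ℝ (Fin n), ‖(Matrix.toEuclideanLin Q) x‖ ≤ α * ‖x‖)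
    (hW : W = Q * Matrix.diagonal d * Q⁻¹)
    (hd : ∀ i, d i ∈ Set.Icc (0 : ℝ) 1) :
    (∀ s : Fin n → ℝ, ∀ k : ℕ, 1 ≤ k →
      ‖(WithLp.equiv 2 (Fin n → ℝ)).symm
          (((1 - W) ^ (k + 1)).mulVec s - ((1 - W) ^ k).mulVec s)‖
        ≤ α * Real.sqrt ((n - (Finset.univ.filter fun i => d i = 1).card
              - (Finset.univ.filter fun i => d i = 0).card : ℕ) : ℝ)
            * ((k : ℝ) ^ k / ((k : ℝ) + 1) ^ (k + 1)) * ‖Q⁻¹.mulVec s‖) ∧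
    (∀ s : Fin n → ℝ, ∀ δ : ℝ, 0 < δ →
      (∃ k₀ : ℕ, ∀ k : ℕ, k₀ ≤ k →
        ‖(WithLp.equiv 2 (Fin n → ℝ)).symm
            (((1 - W) ^ (k + 1)).mulVec s - ((1 - W) ^ k).mulVec s)‖ < δ) ∧
      (0 < n - (Finset.univ.filter fun i => d i = 1).card
            - (Finset.univ.filter fun i => d i = 0).card →
        ∀ k₀ : ℕ, 1 ≤ k₀ →
          (k₀ : ℝ) ^ k₀ / ((k₀ : ℝ) + 1) ^ (k₀ + 1)
            < δ / (α * ‖Q⁻¹.mulVec s‖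
                * Real.sqrt ((n - (Finset.univ.filter fun i => d i = 1).card
                    - (Finset.univ.filter fun i => d i = 0).card : ℕ) : ℝ)) →
          ∀ k : ℕ, k₀ ≤ k →
            ‖(WithLp.equiv 2 (Fin n → ℝ)).symm
                (((1 - W) ^ (k + 1)).mulVec s - ((1 - W) ^ k).mulVec s)‖ < δ)) := by
  set r : ℕ := n - (Finset.univ.filter fun i => d i = 1).card
      - (Finset.univ.filter fun i => d i = 0).card with hr
  refine ⟨fun s k hk => stmt19_main W Q d α hQ hα hW hd s k hk, fun s δ hδ => ⟨?_, ?_⟩⟩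
  · -- existence of k₀
    set C : ℝ := |α| * Real.sqrt (r : ℝ) * ‖Q⁻¹.mulVec s‖ with hC
    have hC0 : 0 ≤ C := by positivity
    obtain ⟨m, hm⟩ := exists_nat_gt (C / δ)
    have hm1 : 1 ≤ m := by
      have h0 : (0 : ℝ) ≤ C / δ := by positivity
      have : (0 : ℝ) < (m : ℝ) := lt_of_le_of_lt h0 hm
      exact_mod_cast this
    refine ⟨m, fun k hk => ?_⟩
    have hk1 : 1 ≤ k := le_trans hm1 hk
    have hb := stmt19_main W Q d α hQ hα hW hd s k hk1
    have h2 : α * Real.sqrt (r : ℝ) * ((k : ℝ) ^ k / ((k : ℝ) + 1) ^ (k + 1)) * ‖Q⁻¹.mulVec s‖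
        ≤ C * ((k : ℝ) ^ k / ((k : ℝ) + 1) ^ (k + 1)) := by
      calc α * Real.sqrt (r : ℝ) * ((k : ℝ) ^ k / ((k : ℝ) + 1) ^ (k + 1)) * ‖Q⁻¹.mulVec s‖
          = α * (Real.sqrt (r : ℝ) * ((k : ℝ) ^ k / ((k : ℝ) + 1) ^ (k + 1))
              * ‖Q⁻¹.mulVec s‖) := by ring
        _ ≤ |α| * (Real.sqrt (r : ℝ) * ((k : ℝ) ^ k / ((k : ℝ) + 1) ^ (k + 1))
              * ‖Q⁻¹.mulVec s‖) :=
            mul_le_mul_of_nonneg_right (le_abs_self α) (by positivity)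
        _ = C * ((k : ℝ) ^ k / ((k : ℝ) + 1) ^ (k + 1)) := by rw [hC]; ring
    have h3 : C * ((k : ℝ) ^ k / ((k : ℝ) + 1) ^ (k + 1)) ≤ C * (1 / ((k : ℝ) + 1)) :=
      mul_le_mul_of_nonneg_left (stmt19_M_le k) hC0
    have h4 : C * (1 / ((k : ℝ) + 1)) < δ := by
      have hkm : (m : ℝ) ≤ (k : ℝ) := by exact_mod_cast hk
      have h5 : C < δ * ((k : ℝ) + 1) := by
        rw [div_lt_iff₀ hδ] at hm
        nlinarith
      rw [mul_one_div, div_lt_iff₀ (by positivity)]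
      linarith
    linarith [hb]
  · -- explicit k₀
    intro hrpos k₀ hk₀ hlt k hk
    have hn : 0 < n := by omega
    have hα0 : 0 ≤ α := by
      have h1 := hα (EuclideanSpace.single ⟨0, hn⟩ 1)
      rw [EuclideanSpace.norm_single, norm_one, mul_one] at h1
      exact le_trans (norm_nonneg _) h1
    set D : ℝ := α * ‖Q⁻¹.mulVec s‖ * Real.sqrt (r : ℝ) with hD
    have hD0 : 0 ≤ D := by positivity
    have hk1 : 1 ≤ k := le_trans hk₀ hk
    have hb := stmt19_main W Q d α hQ hα hW hd s k hk1
    have hMpos : 0 < (k₀ : ℝ) ^ k₀ / ((k₀ : ℝ) + 1) ^ (k₀ + 1) := by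
      have hk₀R : (0 : ℝ) < (k₀ : ℝ) := by exact_mod_cast hk₀
      exact div_pos (pow_pos hk₀R k₀) (by positivity)
    rcases eq_or_lt_of_le hD0 with hDz | hDpos
    · rw [← hDz, div_zero] at hlt
      linarith
    · have hlt' : (k₀ : ℝ) ^ k₀ / ((k₀ : ℝ) + 1) ^ (k₀ + 1) * D < δ :=
        (lt_div_iff₀ hDpos).1 hlt
      have hmon : (k : ℝ) ^ k / ((k : ℝ) + 1) ^ (k + 1)
          ≤ (k₀ : ℝ) ^ k₀ / ((k₀ : ℝ) + 1) ^ (k₀ + 1) := stmt19_M_anti k₀ k hk₀ hk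
      have heq : α * Real.sqrt (r : ℝ) * ((k : ℝ) ^ k / ((k : ℝ) + 1) ^ (k + 1))
          * ‖Q⁻¹.mulVec s‖ = (k : ℝ) ^ k / ((k : ℝ) + 1) ^ (k + 1) * D := by
        rw [hD]; ring
      have h6 : (k : ℝ) ^ k / ((k : ℝ) + 1) ^ (k + 1) * D
          ≤ (k₀ : ℝ) ^ k₀ / ((k₀ : ℝ) + 1) ^ (k₀ + 1) * D :=
        mul_le_mul_of_nonneg_right hmon hD0
      linarith [heq ▸ hb]
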